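/- Let n, N, r ≥ 1 be integers with N ≤ n, let B be an N×n real matrix, c ∈ ℝ^N, and let α₀, …, α_r, β₀, …, β_r be real numbers with α_r ≠ 0 and Σ_{j=0}^{r} α_j = 0 (the consistency condition of a linear multistep method). Let M₀, …, M_r be n×n real matrices, let h > 0, let u⁰, …, u^{r−1} ∈ ℝⁿ satisfy B uʲ = c for each 0 ≤ j ≤ r−1, and suppose û ∈ ℝⁿ satisfies the multistep relation α_r û + Σ_{j=0}^{r−1} α_j uʲ = h (Σ_{j=0}^{r−1} β_j M_j uʲ + β_r M_r û). Then the boundary residual of û satisfies ‖B û − c‖ ≤ (h/|α_r|) · ‖B‖ · (Σ_{j=0}^{r−1} |β_j| ‖M_j‖ ‖uʲ‖ + |β_r| ‖M_r‖ ‖û‖); in particular it is bounded by a constant times the step size h. -/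

import Mathlib

open Matrix

/-- The `ℓ∞` norm of a vector. -/
noncomputable def vecNorm {ι : Type*} [Fintype ι] (v : ι → ℝ) : ℝ :=
  ⨆ i, |v i|

/-- The matrix norm induced by the `ℓ∞` vector norm: the maximum absolute row sum. -/
noncomputable def matNorm {ι κ : Type*} [Fintype ι] [Fintype κ] (A : Matrix ι κ ℝ) : ℝ :=
  ⨆ i, ∑ j, |A i j|

lemma abs_le_vecNorm {ι : Type*} [Fintype ι] (v : ι → ℝ) (i : ι) : |v i| ≤ vecNorm v :=
  le_ciSup (f := fun i => |v i|) (Set.Finite.bddAbove (Set.finite_range _)) i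

lemma vecNorm_nonneg {ι : Type*} [Fintype ι] [Nonempty ι] (v : ι → ℝ) : 0 ≤ vecNorm v := by
  obtain ⟨i⟩ := ‹Nonempty ι›
  exact (abs_nonneg (v i)).trans (abs_le_vecNorm v i)

lemma vecNorm_le {ι : Type*} [Fintype ι] [Nonempty ι] {v : ι → ℝ} {a : ℝ}
    (hb : ∀ i, |v i| ≤ a) : vecNorm v ≤ a := ciSup_le hb

lemma rowsum_le_matNorm {ι κ : Type*} [Fintype ι] [Fintype κ] (A : Matrix ι κ ℝ) (i : ι) :
    ∑ j, |A i j| ≤ matNorm A :=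
  le_ciSup (f := fun i => ∑ j, |A i j|) (Set.Finite.bddAbove (Set.finite_range _)) i

lemma matNorm_nonneg {ι κ : Type*} [Fintype ι] [Fintype κ] [Nonempty ι]
    (A : Matrix ι κ ℝ) : 0 ≤ matNorm A := by
  obtain ⟨i⟩ := ‹Nonempty ι›
  exact (Finset.sum_nonneg fun j _ => abs_nonneg _).trans (rowsum_le_matNorm A i)

lemma abs_mulVec_le {ι κ : Type*} [Fintype ι] [Fintype κ] [Nonempty κ]
    (A : Matrix ι κ ℝ) (x : κ → ℝ) (i : ι) :
    |(A *ᵥ x) i| ≤ matNorm A * vecNorm x := by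
  calc |(A *ᵥ x) i| = |∑ j, A i j * x j| := rfl
    _ ≤ ∑ j, |A i j * x j| := Finset.abs_sum_le_sum_abs _ _
    _ = ∑ j, |A i j| * |x j| := by simp [abs_mul]
    _ ≤ ∑ j, |A i j| * vecNorm x :=
        Finset.sum_le_sum fun j _ =>
          mul_le_mul_of_nonneg_left (abs_le_vecNorm x j) (abs_nonneg _)
    _ = (∑ j, |A i j|) * vecNorm x := by rw [Finset.sum_mul]
    _ ≤ matNorm A * vecNorm x :=
        mul_le_mul_of_nonneg_right (rowsum_le_matNorm A i) (vecNorm_nonneg x)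

/-- Boundary residual of the uncorrected Approach-2 solution after one step of an
`r`-step linear multistep method. If `α_r ≠ 0`, `Σ_{j=0}^{r} α_j = 0` (consistency),
`B uʲ = c` for the previous steps `0 ≤ j ≤ r-1`, and `û` satisfies the multistep relation
`α_r û + Σ_{j<r} α_j uʲ = h (Σ_{j<r} β_j M_j uʲ + β_r M_r û)`, then
`‖B û − c‖ ≤ (h/|α_r|) ‖B‖ (Σ_{j<r} |β_j| ‖M_j‖ ‖uʲ‖ + |β_r| ‖M_r‖ ‖û‖)`,
a bound proportional to the step size `h`. -/
theorem stmt18 (n N r : ℕ) (hn : 1 ≤ n) (hN : 1 ≤ N) (hNn : N ≤ n) (hr : 1 ≤ r)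
    (B : Matrix (Fin N) (Fin n) ℝ) (c : Fin N → ℝ)
    (α β : ℕ → ℝ) (hαr : α r ≠ 0) (hconsist : ∑ j ∈ Finset.range (r + 1), α j = 0)
    (M : ℕ → Matrix (Fin n) (Fin n) ℝ) (h : ℝ) (hh : 0 < h)
    (u : ℕ → Fin n → ℝ) (hbc : ∀ j < r, B *ᵥ u j = c)
    (uhat : Fin n → ℝ)
    (hstep : α r • uhat + ∑ j ∈ Finset.range r, α j • u j
        = h • (∑ j ∈ Finset.range r, β j • ((M j) *ᵥ u j) + β r • ((M r) *ᵥ uhat))) :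
    vecNorm (B *ᵥ uhat - c)
      ≤ h / |α r| * matNorm B
        * (∑ j ∈ Finset.range r, |β j| * matNorm (M j) * vecNorm (u j)
            + |β r| * matNorm (M r) * vecNorm uhat) := by
  haveI : Nonempty (Fin n) := ⟨⟨0, hn⟩⟩
  haveI : Nonempty (Fin N) := ⟨⟨0, hN⟩⟩
  set w : Fin n → ℝ :=
    ∑ j ∈ Finset.range r, β j • ((M j) *ᵥ u j) + β r • ((M r) *ᵥ uhat) with hw
  have hsum : ∑ j ∈ Finset.range r, α j = -(α r) := by
    have := hconsist
    rw [Finset.sum_range_succ] at this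
    linarith
  have key : B *ᵥ uhat - c = (h / α r) • (B *ᵥ w) := by
    have h1 := congrArg (fun v => B *ᵥ v) hstep
    simp only [Matrix.mulVec_add, Matrix.mulVec_smul] at h1
    have h2 : B *ᵥ ∑ j ∈ Finset.range r, α j • u j
        = ∑ j ∈ Finset.range r, α j • (B *ᵥ u j) := by
      rw [show B *ᵥ ∑ j ∈ Finset.range r, α j • u j
          = Matrix.mulVecLin B (∑ j ∈ Finset.range r, α j • u j) from rfl,
        map_sum]
      simp [Matrix.mulVecLin_apply, Matrix.mulVec_smul]
    rw [h2] at h1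
    have h3 : ∑ j ∈ Finset.range r, α j • (B *ᵥ u j) = -(α r) • c := by
      have he : ∀ j ∈ Finset.range r, α j • (B *ᵥ u j) = α j • c := fun j hj => by
        rw [hbc j (Finset.mem_range.mp hj)]
      rw [Finset.sum_congr rfl he, ← Finset.sum_smul, hsum]
    rw [h3] at h1
    have h4 : α r • (B *ᵥ uhat - c) = h • (B *ᵥ w) := by
      rw [smul_sub]
      rw [← h1]
      simp [neg_smul]
      abel
    have h5 := congrArg (fun v => (α r)⁻¹ • v) h4
    simp only [smul_smul, inv_mul_cancel₀ hαr, one_smul] at h5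
    rw [h5, div_eq_mul_inv, mul_comm]
  rw [key]
  have hwle : vecNorm w
      ≤ ∑ j ∈ Finset.range r, |β j| * matNorm (M j) * vecNorm (u j)
          + |β r| * matNorm (M r) * vecNorm uhat := by
    apply vecNorm_le
    intro i
    have : |w i| ≤ ∑ j ∈ Finset.range r, |β j| * |((M j) *ᵥ u j) i|
        + |β r| * |((M r) *ᵥ uhat) i| := by
      calc |w i| ≤ |(∑ j ∈ Finset.range r, β j • ((M j) *ᵥ u j)) i|
            + |(β r • ((M r) *ᵥ uhat)) i| := by
            rw [hw]; exact abs_add_le _ _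
        _ ≤ ∑ j ∈ Finset.range r, |β j| * |((M j) *ᵥ u j) i|
            + |β r| * |((M r) *ᵥ uhat) i| := by
            gcongr
            · calc |(∑ j ∈ Finset.range r, β j • ((M j) *ᵥ u j)) i|
                  = |∑ j ∈ Finset.range r, β j * ((M j) *ᵥ u j) i| := by
                    simp [Finset.sum_apply]
                _ ≤ ∑ j ∈ Finset.range r, |β j * ((M j) *ᵥ u j) i| :=
                    Finset.abs_sum_le_sum_abs _ _
                _ = ∑ j ∈ Finset.range r, |β j| * |((M j) *ᵥ u j) i| := by
                    simp [abs_mul]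
            · simp [abs_mul]
    refine this.trans (add_le_add (Finset.sum_le_sum fun j hj => ?_) ?_)
    · rw [mul_assoc]
      exact mul_le_mul_of_nonneg_left (abs_mulVec_le _ _ _) (abs_nonneg _)
    · rw [mul_assoc]
      exact mul_le_mul_of_nonneg_left (abs_mulVec_le _ _ _) (abs_nonneg _)
  have hBw : vecNorm ((h / α r) • (B *ᵥ w)) ≤ h / |α r| * (matNorm B * vecNorm w) := by
    apply vecNorm_le
    intro i
    have : |((h / α r) • (B *ᵥ w)) i| = |h / α r| * |(B *ᵥ w) i| := by
      simp [abs_mul]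
    rw [this, abs_div, abs_of_pos hh]
    exact mul_le_mul_of_nonneg_left (abs_mulVec_le B w i)
      (div_nonneg hh.le (abs_nonneg _))
  refine hBw.trans ?_
  rw [mul_assoc]
  exact mul_le_mul_of_nonneg_left
    (mul_le_mul_of_nonneg_left hwle (matNorm_nonneg B))
    (div_nonneg hh.le (abs_nonneg _))
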